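/- Let H be a continuous probability distribution function on ℝ, let ρ ∈ ℝ and D ∈ ℝ, and define ψ_1(c) = c^ρ and ψ_2(c) = D·log c if ρ = 0 and ψ_2(c) = D(c^ρ − 1)/ρ if ρ ≠ 0. Define I = ∫_1^∞ ∫_1^∞ y^{−1} H(ψ_1(1/y) H^←(1/x) + ψ_2(1/y)) (dx/x)(dy/y) and Ĩ = ∫_1^∞ ∫_1^∞ y^{−1} [1 − H(ψ_1(1/y) H^←(1 − 1/x) + ψ_2(1/y))] (dx/x)(dy/y). Then I = 1 and Ĩ = 1 if and only if ρ = 0 and D = 0. -/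

import Mathlib

open Filter Set

noncomputable section

/-- The left-continuous inverse `G^←(p) = inf {x | G(x) ≥ p}` of a distribution function. -/
def leftInv (G : ℝ → ℝ) (p : ℝ) : ℝ := sInf {x : ℝ | p ≤ G x}

open MeasureTheory

lemma H_nonneg {H : ℝ → ℝ} (hmono : Monotone H) (h0 : Tendsto H atBot (nhds 0)) (x : ℝ) :
    0 ≤ H x := hmono.le_of_tendsto h0 x

lemma H_le_one {H : ℝ → ℝ} (hmono : Monotone H) (h1 : Tendsto H atTop (nhds 1)) (x : ℝ) :
    H x ≤ 1 := hmono.ge_of_tendsto h1 x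

lemma exists_H_eq {H : ℝ → ℝ} (hmono : Monotone H) (hcont : Continuous H)
    (h0 : Tendsto H atBot (nhds 0)) (h1 : Tendsto H atTop (nhds 1))
    {p : ℝ} (hp0 : 0 < p) (hp1 : p < 1) : ∃ x, H x = p := by
  obtain ⟨a, ha⟩ := (h0.eventually_lt_const hp0).exists
  obtain ⟨b, hb⟩ := (h1.eventually_const_lt hp1).exists
  have hab : a ≤ b := by
    by_contra hba
    exact absurd (hmono (le_of_not_ge hba)) (by nlinarith)
  obtain ⟨x, _, hx⟩ := intermediate_value_Icc hab hcont.continuousOn ⟨ha.le, hb.le⟩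
  exact ⟨x, hx⟩

lemma bddBelow_H_set {H : ℝ → ℝ} (h0 : Tendsto H atBot (nhds 0))
    {p : ℝ} (hp0 : 0 < p) : BddBelow {x : ℝ | p ≤ H x} := by
  obtain ⟨a, ha⟩ := (h0.eventually_lt_const hp0).exists_forall_of_atBot
  refine ⟨a, fun x hx => ?_⟩
  by_contra hxa
  exact absurd hx (by simpa using (ha x (le_of_not_ge hxa)))

lemma H_leftInv {H : ℝ → ℝ} (hmono : Monotone H) (hcont : Continuous H)
    (h0 : Tendsto H atBot (nhds 0)) (h1 : Tendsto H atTop (nhds 1))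
    {p : ℝ} (hp0 : 0 < p) (hp1 : p < 1) : H (leftInv H p) = p := by
  obtain ⟨x, hx⟩ := exists_H_eq hmono hcont h0 h1 hp0 hp1
  have hne : {z : ℝ | p ≤ H z}.Nonempty := ⟨x, by simp [hx]⟩
  have hbdd := bddBelow_H_set h0 hp0
  have hcl : IsClosed {z : ℝ | p ≤ H z} := isClosed_le continuous_const hcont
  have hmem := hcl.csInf_mem hne hbdd
  have hle : leftInv H p ≤ x := csInf_le hbdd (by simp [hx])
  have h2 : H (leftInv H p) ≤ p := le_trans (hmono hle) (le_of_eq hx)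
  exact le_antisymm h2 hmem

lemma leftInv_le {H : ℝ → ℝ} (h0 : Tendsto H atBot (nhds 0))
    {p c : ℝ} (hp0 : 0 < p) (h : p ≤ H c) : leftInv H p ≤ c :=
  csInf_le (bddBelow_H_set h0 hp0) h

lemma w_eq_rpow {y : ℝ} (hy : 1 < y) : y⁻¹ * y⁻¹ = y ^ (-2 : ℝ) := by
  have h0 : 0 < y := lt_trans one_pos hy
  rw [show (-2:ℝ) = -(2:ℕ) by norm_num, Real.rpow_neg h0.le, Real.rpow_natCast]
  field_simp

lemma integrableOn_w : IntegrableOn (fun y : ℝ => y⁻¹ * y⁻¹) (Ioi (1:ℝ)) := by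
  refine (integrableOn_Ioi_rpow_of_lt (by norm_num : (-2:ℝ) < -1) one_pos).congr_fun
    (fun y hy => (w_eq_rpow hy).symm) measurableSet_Ioi

lemma integral_w : ∫ y in Ioi (1:ℝ), y⁻¹ * y⁻¹ = 1 := by
  rw [setIntegral_congr_fun measurableSet_Ioi (fun y hy => w_eq_rpow hy),
    integral_Ioi_rpow_of_lt (by norm_num : (-2:ℝ) < -1) one_pos]
  norm_num

lemma integral_w_mul_const (c : ℝ) : ∫ y in Ioi (1:ℝ), y⁻¹ * (y⁻¹ * c) = c := by
  have : ∀ y : ℝ, y⁻¹ * (y⁻¹ * c) = y⁻¹ * y⁻¹ * c := fun y => by ring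
  simp_rw [this]
  rw [integral_mul_const, integral_w, one_mul]

def Tmap (ρ D y t : ℝ) : ℝ :=
  y⁻¹ ^ ρ * t + (if ρ = 0 then D * Real.log y⁻¹ else D * (y⁻¹ ^ ρ - 1) / ρ)

lemma contOn_rpow_inv (ρ : ℝ) : ContinuousOn (fun y : ℝ => y⁻¹ ^ ρ) (Ioi (1:ℝ)) := by
  intro y hy
  have h0 : (0:ℝ) < y := lt_trans one_pos hy
  exact ((continuousAt_inv₀ h0.ne').rpow_const (Or.inl (inv_ne_zero h0.ne'))).continuousWithinAt

lemma contOn_Tmap (ρ D t : ℝ) : ContinuousOn (fun y => Tmap ρ D y t) (Ioi (1:ℝ)) := by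
  unfold Tmap
  apply ContinuousOn.add ((contOn_rpow_inv ρ).mul continuousOn_const)
  by_cases hρ : ρ = 0
  · simp only [hρ, if_true]
    refine ContinuousOn.mul continuousOn_const ?_
    intro y hy
    have h0 : (0:ℝ) < y := lt_trans one_pos hy
    exact ((Real.continuousAt_log (inv_ne_zero h0.ne')).comp
      (continuousAt_inv₀ h0.ne')).continuousWithinAt
  · simp only [hρ, if_false]
    exact (continuousOn_const.mul ((contOn_rpow_inv ρ).sub continuousOn_const)).div_const ρ

lemma integrableOn_w_mul {f : ℝ → ℝ} (hf : ContinuousOn f (Ioi (1:ℝ))) {C : ℝ}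
    (hbd : ∀ y ∈ Ioi (1:ℝ), |f y| ≤ C) :
    IntegrableOn (fun y => y⁻¹ * (y⁻¹ * f y)) (Ioi (1:ℝ)) := by
  have hinv : ContinuousOn (fun y : ℝ => y⁻¹) (Ioi (1:ℝ)) :=
    continuousOn_id.inv₀ (fun y hy => ne_of_gt (lt_trans one_pos hy))
  have hC : 0 ≤ C := le_trans (abs_nonneg _) (hbd 2 (by norm_num))
  have hwc : IntegrableOn (fun y : ℝ => y⁻¹ * (y⁻¹ * C)) (Ioi (1:ℝ)) :=
    IntegrableOn.congr_fun (integrableOn_w.mul_const C) (fun y hy => by ring) measurableSet_Ioi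
  refine Integrable.mono' hwc
    ((hinv.mul (hinv.mul hf)).aestronglyMeasurable measurableSet_Ioi) ?_
  rw [ae_restrict_iff' measurableSet_Ioi]
  refine Filter.Eventually.of_forall (fun y hy => ?_)
  have h0 : (0:ℝ) < y⁻¹ := inv_pos.2 (lt_trans one_pos hy)
  have := hbd y hy
  rw [Real.norm_eq_abs, abs_mul, abs_mul, abs_of_pos h0]
  exact mul_le_mul_of_nonneg_left (mul_le_mul_of_nonneg_left this h0.le) h0.le

def Del (H : ℝ → ℝ) (ρ D t : ℝ) : ℝ :=
  ∫ y in Ioi (1:ℝ), y⁻¹ * (y⁻¹ * (H (Tmap ρ D y t) - H t))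


section inner
variable {H : ℝ → ℝ} {ρ D : ℝ}

lemma contOn_HT (hcont : Continuous H) (t : ℝ) :
    ContinuousOn (fun y => H (Tmap ρ D y t)) (Ioi (1:ℝ)) :=
  hcont.comp_continuousOn (contOn_Tmap ρ D t)

lemma bd_HT (hmono : Monotone H) (h0 : Tendsto H atBot (nhds 0)) (h1 : Tendsto H atTop (nhds 1))
    (t : ℝ) : ∀ y ∈ Ioi (1:ℝ), |H (Tmap ρ D y t) - H t| ≤ 1 := by
  intro y _
  rw [abs_le]
  constructor
  · have := H_le_one hmono h1 t
    have := H_nonneg hmono h0 (Tmap ρ D y t)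
    linarith
  · have := H_nonneg hmono h0 t
    have := H_le_one hmono h1 (Tmap ρ D y t)
    linarith

lemma integrableOn_inner_diff (hmono : Monotone H) (hcont : Continuous H)
    (h0 : Tendsto H atBot (nhds 0)) (h1 : Tendsto H atTop (nhds 1)) (t : ℝ) :
    IntegrableOn (fun y => y⁻¹ * (y⁻¹ * (H (Tmap ρ D y t) - H t))) (Ioi (1:ℝ)) :=
  integrableOn_w_mul ((contOn_HT hcont t).sub continuousOn_const) (bd_HT hmono h0 h1 t)

lemma inner_eq (hmono : Monotone H) (hcont : Continuous H)
    (h0 : Tendsto H atBot (nhds 0)) (h1 : Tendsto H atTop (nhds 1)) (t : ℝ) :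
    ∫ y in Ioi (1:ℝ), y⁻¹ * (y⁻¹ * H (Tmap ρ D y t)) = Del H ρ D t + H t := by
  have h2 : IntegrableOn (fun y : ℝ => y⁻¹ * (y⁻¹ * H t)) (Ioi (1:ℝ)) :=
    integrableOn_w_mul continuousOn_const (C := |H t|) (fun y _ => le_refl _)
  rw [setIntegral_congr_fun measurableSet_Ioi
    (show EqOn (fun y : ℝ => y⁻¹ * (y⁻¹ * H (Tmap ρ D y t)))
      (fun y : ℝ => y⁻¹ * (y⁻¹ * (H (Tmap ρ D y t) - H t)) + y⁻¹ * (y⁻¹ * H t)) (Ioi 1)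
      from fun y _ => by ring),
    integral_add (integrableOn_inner_diff hmono hcont h0 h1 t) h2]
  rw [integral_w_mul_const (H t)]
  rfl

lemma inner2_eq (hmono : Monotone H) (hcont : Continuous H)
    (h0 : Tendsto H atBot (nhds 0)) (h1 : Tendsto H atTop (nhds 1)) (t : ℝ) :
    ∫ y in Ioi (1:ℝ), y⁻¹ * (y⁻¹ * (1 - H (Tmap ρ D y t))) = 1 - (Del H ρ D t + H t) := by
  have h2 : IntegrableOn (fun y : ℝ => y⁻¹ * (y⁻¹ * H (Tmap ρ D y t))) (Ioi (1:ℝ)) :=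
    integrableOn_w_mul (contOn_HT hcont t)
      (C := 1) (fun y hy => abs_le.2 ⟨by have := H_nonneg hmono h0 (Tmap ρ D y t); linarith,
        H_le_one hmono h1 (Tmap ρ D y t) |>.trans (by norm_num) |>.trans_eq rfl⟩)
  rw [setIntegral_congr_fun measurableSet_Ioi
    (show EqOn (fun y : ℝ => y⁻¹ * (y⁻¹ * (1 - H (Tmap ρ D y t))))
      (fun y : ℝ => y⁻¹ * (y⁻¹ * (1:ℝ)) - y⁻¹ * (y⁻¹ * H (Tmap ρ D y t))) (Ioi 1)
      from fun y _ => by ring),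
    integral_sub (integrableOn_w_mul continuousOn_const (C := 1) (fun y _ => by norm_num)) h2,
    integral_w_mul_const (1:ℝ), inner_eq hmono hcont h0 h1 t]

lemma Del_nonpos (h : ∀ y ∈ Ioi (1:ℝ), H (Tmap ρ D y t) ≤ H t) : Del H ρ D t ≤ 0 := by
  refine setIntegral_nonpos measurableSet_Ioi (fun y hy => ?_)
  have h0 : (0:ℝ) ≤ y⁻¹ := inv_nonneg.2 (le_of_lt (lt_trans one_pos hy))
  exact mul_nonpos_of_nonneg_of_nonpos h0
    (mul_nonpos_of_nonneg_of_nonpos h0 (by linarith [h y hy]))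

lemma Del_nonneg (h : ∀ y ∈ Ioi (1:ℝ), H t ≤ H (Tmap ρ D y t)) : 0 ≤ Del H ρ D t := by
  refine setIntegral_nonneg measurableSet_Ioi (fun y hy => ?_)
  have h0 : (0:ℝ) ≤ y⁻¹ := inv_nonneg.2 (le_of_lt (lt_trans one_pos hy))
  exact mul_nonneg h0 (mul_nonneg h0 (by linarith [h y hy]))

lemma ae_eq_of_Del_zero (hmono : Monotone H) (hcont : Continuous H)
    (h0 : Tendsto H atBot (nhds 0)) (h1 : Tendsto H atTop (nhds 1)) {t : ℝ}
    (hz : Del H ρ D t = 0)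
    (hsgn : (∀ y ∈ Ioi (1:ℝ), H (Tmap ρ D y t) ≤ H t) ∨ (∀ y ∈ Ioi (1:ℝ), H t ≤ H (Tmap ρ D y t))) :
    ∀ᵐ y ∂(volume.restrict (Ioi (1:ℝ))), H (Tmap ρ D y t) = H t := by
  rcases hsgn with hs | hs
  · have hint := (integrableOn_inner_diff hmono hcont h0 h1 (ρ := ρ) (D := D) t).neg
    have hnn : 0 ≤ᵐ[volume.restrict (Ioi (1:ℝ))]
        (fun y => -(y⁻¹ * (y⁻¹ * (H (Tmap ρ D y t) - H t)))) := by
      filter_upwards [ae_restrict_mem (μ := volume) measurableSet_Ioi (s := Ioi (1:ℝ))] with y hy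
      have hy0 : (0:ℝ) ≤ y⁻¹ := inv_nonneg.2 (le_of_lt (lt_trans one_pos hy))
      simp only [Pi.zero_apply, neg_nonneg]
      exact mul_nonpos_of_nonneg_of_nonpos hy0
        (mul_nonpos_of_nonneg_of_nonpos hy0 (by linarith [hs y hy]))
    have hiz : ∫ y in Ioi (1:ℝ), -(y⁻¹ * (y⁻¹ * (H (Tmap ρ D y t) - H t))) = 0 := by
      rw [integral_neg]
      simpa [Del] using congrArg Neg.neg hz
    have := (integral_eq_zero_iff_of_nonneg_ae hnn hint).1 hiz
    rw [Filter.EventuallyEq] at this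
    have hmem := ae_restrict_mem (μ := volume) measurableSet_Ioi (s := Ioi (1:ℝ))
    filter_upwards [this, hmem] with y hy hymem
    have hy0 : (0:ℝ) < y⁻¹ := inv_pos.2 (lt_trans one_pos hymem)
    have : y⁻¹ * (y⁻¹ * (H (Tmap ρ D y t) - H t)) = 0 := by
      simpa using hy
    have := mul_eq_zero.1 this
    rcases this with h | h
    · exact absurd h hy0.ne'
    · rcases mul_eq_zero.1 h with h | h
      · exact absurd h hy0.ne'
      · linarith
  · have hint := integrableOn_inner_diff hmono hcont h0 h1 (ρ := ρ) (D := D) t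
    have hnn : 0 ≤ᵐ[volume.restrict (Ioi (1:ℝ))]
        (fun y => y⁻¹ * (y⁻¹ * (H (Tmap ρ D y t) - H t))) := by
      filter_upwards [ae_restrict_mem (μ := volume) measurableSet_Ioi (s := Ioi (1:ℝ))] with y hy
      have hy0 : (0:ℝ) ≤ y⁻¹ := inv_nonneg.2 (le_of_lt (lt_trans one_pos hy))
      exact mul_nonneg hy0 (mul_nonneg hy0 (by linarith [hs y hy]))
    have := (integral_eq_zero_iff_of_nonneg_ae hnn hint).1 hz
    rw [Filter.EventuallyEq] at this
    have hmem := ae_restrict_mem (μ := volume) measurableSet_Ioi (s := Ioi (1:ℝ))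
    filter_upwards [this, hmem] with y hy hymem
    have hy0 : (0:ℝ) < y⁻¹ := inv_pos.2 (lt_trans one_pos hymem)
    have : y⁻¹ * (y⁻¹ * (H (Tmap ρ D y t) - H t)) = 0 := by simpa using hy
    rcases mul_eq_zero.1 this with h | h
    · exact absurd h hy0.ne'
    · rcases mul_eq_zero.1 h with h | h
      · exact absurd h hy0.ne'
      · linarith

end inner

lemma exists_of_ae {P : ℝ → Prop} (h : ∀ᵐ s ∂(volume.restrict (Ioi (1:ℝ))), P s) (B : ℝ) :
    ∃ s, B < s ∧ 1 < s ∧ P s := by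
  rw [ae_restrict_iff' measurableSet_Ioi] at h
  rw [Filter.eventually_iff, mem_ae_iff] at h
  by_contra hc
  push_neg at hc
  have hsub : Ioi (max B 1) ⊆ {x : ℝ | x ∈ Ioi 1 → P x}ᶜ := by
    intro s hs
    have hB : B < s := lt_of_le_of_lt (le_max_left _ _) hs
    have h1 : (1:ℝ) < s := lt_of_le_of_lt (le_max_right _ _) hs
    intro hPs
    exact hc s hB h1 (hPs h1)
  have := measure_mono_null hsub h
  rw [Real.volume_Ioi] at this
  exact ENNReal.top_ne_zero this

-- ### The involution φ(s) = s/(s-1) on (1,∞)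

def phi (s : ℝ) : ℝ := s / (s - 1)

lemma phi_mem {s : ℝ} (hs : 1 < s) : 1 < phi s := by
  rw [phi, lt_div_iff₀ (by linarith)]
  linarith

lemma phi_phi {s : ℝ} (hs : 1 < s) : phi (phi s) = s := by
  have h1 : s - 1 ≠ 0 := by intro h; linarith [sub_eq_zero.1 h]
  rw [phi, phi, div_sub_one h1]
  have h2 : s - (s - 1) = 1 := by ring
  rw [h2]
  field_simp

lemma phi_image : phi '' (Ioi (1:ℝ)) = Ioi (1:ℝ) := by
  apply Subset.antisymm
  · rintro x ⟨s, hs, rfl⟩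
    exact phi_mem hs
  · intro x hx
    exact ⟨phi x, phi_mem hx, phi_phi hx⟩

lemma phi_injOn : InjOn phi (Ioi (1:ℝ)) := by
  intro a ha b hb h
  have := congrArg phi h
  rwa [phi_phi ha, phi_phi hb] at this

lemma phi_hasDeriv {s : ℝ} (hs : 1 < s) :
    HasDerivWithinAt phi (-1 / (s - 1) ^ 2) (Ioi (1:ℝ)) s := by
  have h1 : s - 1 ≠ 0 := by intro h; linarith [sub_eq_zero.1 h]
  have hd : HasDerivAt phi ((1 * (s - 1) - s * 1) / (s - 1) ^ 2) s :=
    (hasDerivAt_id s).div ((hasDerivAt_id s).sub_const 1) h1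
  have : (1 * (s - 1) - s * 1) / (s - 1) ^ 2 = -1 / (s - 1) ^ 2 := by ring_nf
  rw [this] at hd
  exact hd.hasDerivWithinAt

lemma phi_inv_eq {s : ℝ} (hs : 1 < s) : 1 - (phi s)⁻¹ = s⁻¹ := by
  have h1 : s - 1 ≠ 0 := by intro h; linarith [sub_eq_zero.1 h]
  have h0 : s ≠ 0 := by positivity
  rw [phi]
  field_simp
  ring

-- ### Combination lemma

lemma ae_zero_of_combination {F : ℝ → ℝ} {α β : ℝ}
    (hint1 : IntegrableOn (fun s => s⁻¹ * F s) (Ioi (1:ℝ)))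
    (hint2 : IntegrableOn (fun s => (s * (s - 1))⁻¹ * F s) (Ioi (1:ℝ)))
    (hI1 : ∫ s in Ioi (1:ℝ), s⁻¹ * F s = 0)
    (hI2 : ∫ s in Ioi (1:ℝ), (s * (s - 1))⁻¹ * F s = 0)
    (hsgn : ∀ s ∈ Ioi (1:ℝ), 0 ≤ (α * (s - 1) + β) * F s)
    (hαβ : α ≠ 0 ∨ β ≠ 0) :
    ∀ᵐ s ∂(volume.restrict (Ioi (1:ℝ))), F s = 0 := by
  set J : ℝ → ℝ := fun s => α * (s⁻¹ * F s) + β * ((s * (s - 1))⁻¹ * F s) with hJ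
  have hintJ : Integrable J (volume.restrict (Ioi (1:ℝ))) :=
    (hint1.const_mul α).add (hint2.const_mul β)
  have hkey : ∀ s ∈ Ioi (1:ℝ), J s = ((α * (s - 1) + β) * F s) * (s * (s - 1))⁻¹ := by
    intro s hs
    have h0 : s ≠ 0 := by intro h; rw [h] at hs; exact absurd hs (by norm_num)
    have h1 : s - 1 ≠ 0 := by intro h; have := sub_eq_zero.1 h; rw [this] at hs; simp at hs
    rw [hJ]
    field_simp
  have hJnn : 0 ≤ᵐ[volume.restrict (Ioi (1:ℝ))] J := by
    filter_upwards [ae_restrict_mem (μ := volume) measurableSet_Ioi (s := Ioi (1:ℝ))] with s hs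
    rw [hkey s hs]
    have hs0 : (0:ℝ) < s := lt_trans one_pos hs
    have : (0:ℝ) ≤ (s * (s - 1))⁻¹ := by
      apply inv_nonneg.2
      have : (0:ℝ) < s - 1 := by simpa using hs
      positivity
    exact mul_nonneg (hsgn s hs) this
  have hJ0 : ∫ s in Ioi (1:ℝ), J s = 0 := by
    rw [hJ]
    rw [integral_add (hint1.const_mul α) (hint2.const_mul β), integral_const_mul,
      integral_const_mul, hI1, hI2]
    ring
  have hae := (integral_eq_zero_iff_of_nonneg_ae hJnn hintJ).1 hJ0
  rw [Filter.EventuallyEq] at hae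
  have hN : ∀ᵐ s ∂(volume.restrict (Ioi (1:ℝ))), α * (s - 1) + β ≠ 0 := by
    rcases eq_or_ne α 0 with hα | hα
    · rcases hαβ with h | hβ
      · exact absurd hα h
      · exact Filter.Eventually.of_forall (fun s => by rw [hα]; simpa using hβ)
    · apply ae_restrict_of_ae
      have hnull : volume {s : ℝ | α * (s - 1) + β = 0} = 0 := by
        refine measure_mono_null ?_ (measure_singleton ((α - β) / α))
        intro s hs
        simp only [mem_setOf_eq] at hs
        simp only [mem_singleton_iff]
        field_simp
        linear_combination hs
      rw [ae_iff]
      simpa using hnull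
  filter_upwards [hae, hN, ae_restrict_mem (μ := volume) measurableSet_Ioi (s := Ioi (1:ℝ))]
    with s hs hNs hmem
  have hJs : ((α * (s - 1) + β) * F s) * (s * (s - 1))⁻¹ = 0 := by
    rw [← hkey s hmem]; simpa using hs
  have hs0 : (0:ℝ) < s := lt_trans one_pos hmem
  have hs1 : (0:ℝ) < s - 1 := by simpa using hmem
  have hne : (s * (s - 1))⁻¹ ≠ 0 := by
    apply inv_ne_zero
    positivity
  rcases mul_eq_zero.1 hJs with h | h
  · rcases mul_eq_zero.1 h with h | h
    · exact absurd h hNs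
    · exact h
  · exact absurd h hne

section forward
variable {H : ℝ → ℝ} {ρ D : ℝ}

lemma forward_C1 (hmono : Monotone H) (hcont : Continuous H)
    (h0 : Tendsto H atBot (nhds 0)) (h1 : Tendsto H atTop (nhds 1))
    (hI : ∫ x in Ioi (1:ℝ), x⁻¹ *
        ∫ y in Ioi (1:ℝ), y⁻¹ * (y⁻¹ * H (Tmap ρ D y (leftInv H x⁻¹))) = 1) :
    IntegrableOn (fun x => x⁻¹ * Del H ρ D (leftInv H x⁻¹)) (Ioi (1:ℝ)) ∧
      ∫ x in Ioi (1:ℝ), x⁻¹ * Del H ρ D (leftInv H x⁻¹) = 0 := by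
  have key : ∀ x ∈ Ioi (1:ℝ),
      x⁻¹ * ∫ y in Ioi (1:ℝ), y⁻¹ * (y⁻¹ * H (Tmap ρ D y (leftInv H x⁻¹)))
        = x⁻¹ * Del H ρ D (leftInv H x⁻¹) + x⁻¹ * x⁻¹ := by
    intro x hx
    have hx0 : (0:ℝ) < x⁻¹ := inv_pos.2 (lt_trans one_pos hx)
    have hx1 : x⁻¹ < 1 := inv_lt_one_of_one_lt₀ hx
    rw [inner_eq hmono hcont h0 h1, H_leftInv hmono hcont h0 h1 hx0 hx1]
    ring
  rw [setIntegral_congr_fun measurableSet_Ioi key] at hI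
  have hnn : ∀ x ∈ Ioi (1:ℝ), 0 ≤ x⁻¹ * Del H ρ D (leftInv H x⁻¹) + x⁻¹ * x⁻¹ := by
    intro x hx
    rw [← key x hx]
    have hx0 : (0:ℝ) ≤ x⁻¹ := inv_nonneg.2 (le_of_lt (lt_trans one_pos hx))
    refine mul_nonneg hx0 (setIntegral_nonneg measurableSet_Ioi (fun y hy => ?_))
    have hy0 : (0:ℝ) ≤ y⁻¹ := inv_nonneg.2 (le_of_lt (lt_trans one_pos hy))
    exact mul_nonneg hy0 (mul_nonneg hy0 (H_nonneg hmono h0 _))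
  have hint : IntegrableOn (fun x => x⁻¹ * Del H ρ D (leftInv H x⁻¹) + x⁻¹ * x⁻¹) (Ioi (1:ℝ)) := by
    by_contra hni
    rw [integral_undef hni] at hI
    norm_num at hI
  have hintf : IntegrableOn (fun x => x⁻¹ * Del H ρ D (leftInv H x⁻¹)) (Ioi (1:ℝ)) :=
    IntegrableOn.congr_fun (hint.sub integrableOn_w) (fun x _ => by simp only [Pi.sub_apply]; ring) measurableSet_Ioi
  refine ⟨hintf, ?_⟩
  rw [integral_add hintf integrableOn_w, integral_w] at hI
  linarith

lemma forward_C2 (hmono : Monotone H) (hcont : Continuous H)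
    (h0 : Tendsto H atBot (nhds 0)) (h1 : Tendsto H atTop (nhds 1))
    (hI : ∫ x in Ioi (1:ℝ), x⁻¹ *
        ∫ y in Ioi (1:ℝ), y⁻¹ * (y⁻¹ * (1 - H (Tmap ρ D y (leftInv H (1 - x⁻¹))))) = 1) :
    IntegrableOn (fun x => x⁻¹ * Del H ρ D (leftInv H (1 - x⁻¹))) (Ioi (1:ℝ)) ∧
      ∫ x in Ioi (1:ℝ), x⁻¹ * Del H ρ D (leftInv H (1 - x⁻¹)) = 0 := by
  have key : ∀ x ∈ Ioi (1:ℝ),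
      x⁻¹ * ∫ y in Ioi (1:ℝ), y⁻¹ * (y⁻¹ * (1 - H (Tmap ρ D y (leftInv H (1 - x⁻¹)))))
        = x⁻¹ * x⁻¹ - x⁻¹ * Del H ρ D (leftInv H (1 - x⁻¹)) := by
    intro x hx
    have hx0 : (0:ℝ) < x⁻¹ := inv_pos.2 (lt_trans one_pos hx)
    have hx1 : x⁻¹ < 1 := inv_lt_one_of_one_lt₀ hx
    have hp0 : (0:ℝ) < 1 - x⁻¹ := by linarith
    have hp1 : 1 - x⁻¹ < 1 := by linarith
    rw [inner2_eq hmono hcont h0 h1, H_leftInv hmono hcont h0 h1 hp0 hp1]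
    ring
  rw [setIntegral_congr_fun measurableSet_Ioi key] at hI
  have hint : IntegrableOn (fun x => x⁻¹ * x⁻¹ - x⁻¹ * Del H ρ D (leftInv H (1 - x⁻¹)))
      (Ioi (1:ℝ)) := by
    by_contra hni
    rw [integral_undef hni] at hI
    norm_num at hI
  have hintf : IntegrableOn (fun x => x⁻¹ * Del H ρ D (leftInv H (1 - x⁻¹))) (Ioi (1:ℝ)) :=
    IntegrableOn.congr_fun (integrableOn_w.sub hint) (fun x _ => by simp only [Pi.sub_apply]; ring) measurableSet_Ioi
  refine ⟨hintf, ?_⟩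
  rw [integral_sub integrableOn_w hintf, integral_w] at hI
  linarith

lemma subst_C2 (hint : IntegrableOn (fun x => x⁻¹ * Del H ρ D (leftInv H (1 - x⁻¹))) (Ioi (1:ℝ)))
    (hI : ∫ x in Ioi (1:ℝ), x⁻¹ * Del H ρ D (leftInv H (1 - x⁻¹)) = 0) :
    IntegrableOn (fun s => (s * (s - 1))⁻¹ * Del H ρ D (leftInv H s⁻¹)) (Ioi (1:ℝ)) ∧
      ∫ s in Ioi (1:ℝ), (s * (s - 1))⁻¹ * Del H ρ D (leftInv H s⁻¹) = 0 := by
  set g : ℝ → ℝ := fun x => x⁻¹ * Del H ρ D (leftInv H (1 - x⁻¹)) with hg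
  have hEq : ∀ s ∈ Ioi (1:ℝ),
      |(-1 / (s - 1) ^ 2)| • g (phi s) = (s * (s - 1))⁻¹ * Del H ρ D (leftInv H s⁻¹) := by
    intro s hs
    have hs1 : (0:ℝ) < s - 1 := by simpa using hs
    have hs0 : (0:ℝ) < s := lt_trans one_pos hs
    have habs : |(-1 / (s - 1) ^ 2)| = 1 / (s - 1) ^ 2 := by
      rw [abs_div, abs_neg, abs_one, abs_of_pos (by positivity)]
    have hgval : g (phi s) = (phi s)⁻¹ * Del H ρ D (leftInv H s⁻¹) := by
      rw [hg]
      simp only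
      rw [phi_inv_eq hs]
    rw [smul_eq_mul, habs, hgval]
    have hphi : (phi s)⁻¹ = (s - 1) / s := by rw [phi, inv_div]
    rw [hphi]
    have h2 : (s - 1) ≠ 0 := hs1.ne'
    field_simp
  have hd : ∀ s ∈ Ioi (1:ℝ), HasDerivWithinAt phi (-1 / (s - 1) ^ 2) (Ioi (1:ℝ)) s :=
    fun s hs => phi_hasDeriv hs
  have him : IntegrableOn g (phi '' Ioi (1:ℝ)) := by rw [phi_image]; exact hint
  have h2 := (integrableOn_image_iff_integrableOn_abs_deriv_smul
    measurableSet_Ioi hd phi_injOn g).1 him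
  constructor
  · exact IntegrableOn.congr_fun h2 hEq measurableSet_Ioi
  · have hval : ∫ x in phi '' Ioi (1:ℝ), g x
        = ∫ s in Ioi (1:ℝ), |(-1 / (s - 1) ^ 2)| • g (phi s) :=
      integral_image_eq_integral_abs_deriv_smul measurableSet_Ioi hd phi_injOn g
    rw [phi_image] at hval
    rw [← setIntegral_congr_fun measurableSet_Ioi hEq, ← hval, hI]

end forward

section tmaps
variable {ρ D : ℝ}

lemma Tmap_eq (hρ : ρ ≠ 0) (y t : ℝ) :
    Tmap ρ D y t = y⁻¹ ^ ρ * (t - (-D / ρ)) + (-D / ρ) := by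
  unfold Tmap
  rw [if_neg hρ]
  field_simp
  ring

lemma Tmap_sub (hρ : ρ ≠ 0) (y t : ℝ) :
    Tmap ρ D y t - t = (y⁻¹ ^ ρ - 1) * (t - (-D / ρ)) := by
  rw [Tmap_eq hρ]
  ring

lemma Tmap_zero (D : ℝ) (y t : ℝ) : Tmap 0 D y t = t - D * Real.log y := by
  unfold Tmap
  rw [if_pos rfl, Real.rpow_zero, Real.log_inv]
  ring

lemma a_lt_one (hρ : 0 < ρ) {y : ℝ} (hy : 1 < y) : y⁻¹ ^ ρ < 1 :=
  Real.rpow_lt_one (inv_nonneg.2 (le_of_lt (lt_trans one_pos hy))) (inv_lt_one_of_one_lt₀ hy) hρ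

lemma one_lt_a (hρ : ρ < 0) {y : ℝ} (hy : 1 < y) : 1 < y⁻¹ ^ ρ := by
  rw [Real.one_lt_rpow_iff_of_pos (inv_pos.2 (lt_trans one_pos hy))]
  exact Or.inr ⟨inv_lt_one_of_one_lt₀ hy, hρ⟩

lemma a_pos {y : ℝ} (hy : 1 < y) : 0 < y⁻¹ ^ ρ :=
  Real.rpow_pos_of_pos (inv_pos.2 (lt_trans one_pos hy)) ρ

lemma inv_rpow_eq {y : ℝ} (hy : 0 < y) (ρ : ℝ) : y⁻¹ ^ ρ = y ^ (-ρ) := by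
  rw [Real.inv_rpow hy.le, ← Real.rpow_neg hy.le]

lemma tendsto_Tmap_rho_pos (hρ : 0 < ρ) (D t : ℝ) :
    Tendsto (fun y => Tmap ρ D y t) atTop (nhds (-D / ρ)) := by
  have hbase : Tendsto (fun y : ℝ => y⁻¹ ^ ρ * (t - (-D / ρ)) + (-D / ρ)) atTop
      (nhds (0 * (t - (-D / ρ)) + (-D / ρ))) := by
    refine Tendsto.add_const _ (Tendsto.mul_const _ ?_)
    apply Tendsto.congr' (Filter.eventuallyEq_of_mem (Ioi_mem_atTop 0)
      (fun y hy => (inv_rpow_eq (mem_Ioi.1 hy) ρ).symm))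
    exact tendsto_rpow_neg_atTop hρ
  rw [zero_mul, zero_add] at hbase
  exact hbase.congr (fun y => (Tmap_eq hρ.ne' y t).symm)

lemma tendsto_Tmap_rho_neg_top (hρ : ρ < 0) {D t : ℝ} (ht : -D / ρ < t) :
    Tendsto (fun y => Tmap ρ D y t) atTop atTop := by
  have h1 : Tendsto (fun y : ℝ => y⁻¹ ^ ρ) atTop atTop := by
    apply Tendsto.congr' (Filter.eventuallyEq_of_mem (Ioi_mem_atTop 0)
      (fun y hy => (inv_rpow_eq (mem_Ioi.1 hy) ρ).symm))
    exact tendsto_rpow_atTop (by linarith)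
  have h2 : Tendsto (fun y : ℝ => y⁻¹ ^ ρ * (t - (-D / ρ)) + (-D / ρ)) atTop atTop :=
    tendsto_atTop_add_const_right _ _ (h1.atTop_mul_const (by linarith))
  exact h2.congr (fun y => (Tmap_eq hρ.ne y t).symm)

lemma tendsto_Tmap_rho_neg_bot (hρ : ρ < 0) {D t : ℝ} (ht : t < -D / ρ) :
    Tendsto (fun y => Tmap ρ D y t) atTop atBot := by
  have h1 : Tendsto (fun y : ℝ => y⁻¹ ^ ρ) atTop atTop := by
    apply Tendsto.congr' (Filter.eventuallyEq_of_mem (Ioi_mem_atTop 0)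
      (fun y hy => (inv_rpow_eq (mem_Ioi.1 hy) ρ).symm))
    exact tendsto_rpow_atTop (by linarith)
  have h2 : Tendsto (fun y : ℝ => y⁻¹ ^ ρ * (t - (-D / ρ)) + (-D / ρ)) atTop atBot :=
    tendsto_atBot_add_const_right _ _ (Tendsto.atTop_mul_const_of_neg (by linarith) h1)
  exact h2.congr (fun y => (Tmap_eq hρ.ne y t).symm)

lemma tendsto_Tmap_zero_bot (hD : 0 < D) (t : ℝ) :
    Tendsto (fun y => Tmap 0 D y t) atTop atBot := by
  have h1 : Tendsto (fun y : ℝ => D * Real.log y) atTop atTop :=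
    Real.tendsto_log_atTop.const_mul_atTop hD
  have h2 : Tendsto (fun y : ℝ => t - D * Real.log y) atTop atBot := by
    simpa [sub_eq_add_neg] using tendsto_atBot_add_const_left _ t (tendsto_neg_atTop_atBot.comp h1)
  exact h2.congr (fun y => (Tmap_zero D y t).symm)

lemma tendsto_Tmap_zero_top (hD : D < 0) (t : ℝ) :
    Tendsto (fun y => Tmap 0 D y t) atTop atTop := by
  have h1 : Tendsto (fun y : ℝ => -(D * Real.log y)) atTop atTop := by
    have := Real.tendsto_log_atTop.const_mul_atTop (show (0:ℝ) < -D by linarith)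
    refine this.congr (fun y => by ring)
  have h2 : Tendsto (fun y : ℝ => t - D * Real.log y) atTop atTop := by
    simpa [sub_eq_add_neg] using tendsto_atTop_add_const_left _ t h1
  exact h2.congr (fun y => (Tmap_zero D y t).symm)

lemma freq_of_ae {P : ℝ → Prop} (h : ∀ᵐ y ∂(volume.restrict (Ioi (1:ℝ))), P y) :
    ∃ᶠ y in atTop, P y := by
  rw [Filter.frequently_atTop]
  intro b
  obtain ⟨y, hb, _, hy⟩ := exists_of_ae h b
  exact ⟨y, hb.le, hy⟩

end tmaps

section signs
variable {ρ D : ℝ}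

lemma mul_nonneg_of_np_np {a b : ℝ} (ha : a ≤ 0) (hb : b ≤ 0) : 0 ≤ a * b := by nlinarith

lemma Tmap_le_A (hρ : ρ ≠ 0) {y t : ℝ} (ha : y⁻¹ ^ ρ ≤ 1) (ht : -D / ρ ≤ t) :
    Tmap ρ D y t ≤ t := by nlinarith [Tmap_sub (D := D) hρ y t]

lemma Tmap_le_B (hρ : ρ ≠ 0) {y t : ℝ} (ha : y⁻¹ ^ ρ ≤ 1) (ht : t ≤ -D / ρ) :
    t ≤ Tmap ρ D y t := by nlinarith [Tmap_sub (D := D) hρ y t]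

lemma Tmap_le_C (hρ : ρ ≠ 0) {y t : ℝ} (ha : 1 ≤ y⁻¹ ^ ρ) (ht : -D / ρ ≤ t) :
    t ≤ Tmap ρ D y t := by nlinarith [Tmap_sub (D := D) hρ y t]

lemma Tmap_le_D (hρ : ρ ≠ 0) {y t : ℝ} (ha : 1 ≤ y⁻¹ ^ ρ) (ht : t ≤ -D / ρ) :
    Tmap ρ D y t ≤ t := by nlinarith [Tmap_sub (D := D) hρ y t]

lemma Tmap0_le (hD : 0 ≤ D) {y : ℝ} (hy : 1 < y) (t : ℝ) : Tmap 0 D y t ≤ t := by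
  rw [Tmap_zero]; nlinarith [Real.log_pos hy]

lemma le_Tmap0 (hD : D ≤ 0) {y : ℝ} (hy : 1 < y) (t : ℝ) : t ≤ Tmap 0 D y t := by
  rw [Tmap_zero]; nlinarith [Real.log_pos hy]

end signs

lemma final_contra {Hc s : ℝ} (hs0 : 0 < s⁻¹) (hB : (max 1 Hc⁻¹) < s) (heq : Hc = s⁻¹) :
    False := by
  have hcpos : 0 < Hc := heq ▸ hs0
  have h1 : Hc⁻¹ < s := lt_of_le_of_lt (le_max_right 1 Hc⁻¹) hB
  have hs : 0 < s := inv_pos.1 hs0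
  have e2 : s * s⁻¹ = 1 := mul_inv_cancel₀ hs.ne'
  have h2 := mul_lt_mul_of_pos_right h1 hcpos
  rw [inv_mul_cancel₀ hcpos.ne'] at h2
  rw [← heq] at e2
  linarith


/-- The deterministic core of Proposition 2.3: for a continuous probability distribution
function `H`, `ψ₁(c) = c^ρ` and `ψ₂(c) = D log c` (if `ρ = 0`) or `D(c^ρ - 1)/ρ` (if `ρ ≠ 0`),
the integrals
`I = ∫_1^∞ ∫_1^∞ y⁻¹ H(ψ₁(1/y) H^←(1/x) + ψ₂(1/y)) (dx/x)(dy/y)` and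
`Ĩ = ∫_1^∞ ∫_1^∞ y⁻¹ [1 - H(ψ₁(1/y) H^←(1 - 1/x) + ψ₂(1/y))] (dx/x)(dy/y)`
are both equal to `1` if and only if `ρ = 0` and `D = 0`. -/
theorem integrals_one_iff_product
    (H : ℝ → ℝ) (hmono : Monotone H) (hcont : Continuous H)
    (h0 : Tendsto H atBot (nhds 0)) (h1 : Tendsto H atTop (nhds 1))
    (ρ D : ℝ) :
    ((∫ x in Set.Ioi (1 : ℝ), x⁻¹ * ∫ y in Set.Ioi (1 : ℝ), y⁻¹ *
        (y⁻¹ * H (y⁻¹ ^ ρ * leftInv H x⁻¹ +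
          (if ρ = 0 then D * Real.log y⁻¹ else D * (y⁻¹ ^ ρ - 1) / ρ)))) = 1 ∧
     (∫ x in Set.Ioi (1 : ℝ), x⁻¹ * ∫ y in Set.Ioi (1 : ℝ), y⁻¹ *
        (y⁻¹ * (1 - H (y⁻¹ ^ ρ * leftInv H (1 - x⁻¹) +
          (if ρ = 0 then D * Real.log y⁻¹ else D * (y⁻¹ ^ ρ - 1) / ρ))))) = 1)
    ↔ (ρ = 0 ∧ D = 0) := by
  constructor
  · rintro ⟨hI, hItil⟩
    have hI' : ∫ x in Ioi (1:ℝ), x⁻¹ *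
        ∫ y in Ioi (1:ℝ), y⁻¹ * (y⁻¹ * H (Tmap ρ D y (leftInv H x⁻¹))) = 1 := hI
    have hItil' : ∫ x in Ioi (1:ℝ), x⁻¹ *
        ∫ y in Ioi (1:ℝ), y⁻¹ * (y⁻¹ * (1 - H (Tmap ρ D y (leftInv H (1 - x⁻¹))))) = 1 := hItil
    obtain ⟨hint1, hC1⟩ := forward_C1 hmono hcont h0 h1 hI'
    obtain ⟨hint2x, hC2x⟩ := forward_C2 hmono hcont h0 h1 hItil'
    obtain ⟨hint2, hC2⟩ := subst_C2 hint2x hC2x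
    by_cases hρ : ρ = 0
    · subst hρ
      refine ⟨rfl, ?_⟩
      by_contra hD0
      rcases lt_or_gt_of_ne hD0 with hD | hD
      · -- D < 0 : Tmap increases, Del ≥ 0, use weight (s-1)
        have hsgn : ∀ s ∈ Ioi (1:ℝ),
            0 ≤ ((1:ℝ) * (s - 1) + 0) * Del H 0 D (leftInv H s⁻¹) := by
          intro s hs
          have hDel : 0 ≤ Del H 0 D (leftInv H s⁻¹) :=
            Del_nonneg (fun y hy => hmono (le_Tmap0 hD.le hy _))
          have hN : (0:ℝ) ≤ (1:ℝ) * (s - 1) + 0 := by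
            have : (1:ℝ) < s := hs
            linarith
          exact mul_nonneg hN hDel
        have hae := ae_zero_of_combination hint1 hint2 hC1 hC2 hsgn (Or.inl one_ne_zero)
        obtain ⟨s, hsB, hs1, hF⟩ := exists_of_ae hae 1
        have hs0 : (0:ℝ) < s⁻¹ := inv_pos.2 (lt_trans one_pos hs1)
        have hHt : H (leftInv H s⁻¹) = s⁻¹ := H_leftInv hmono hcont h0 h1 hs0 (inv_lt_one_of_one_lt₀ hs1)
        have haey := ae_eq_of_Del_zero hmono hcont h0 h1 hF
          (Or.inr (fun y hy => hmono (le_Tmap0 hD.le hy _)))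
        have hlim : Tendsto (fun y => H (Tmap 0 D y (leftInv H s⁻¹))) atTop (nhds 1) :=
          h1.comp (tendsto_Tmap_zero_top hD _)
        have huniq := tendsto_nhds_unique_of_frequently_eq hlim tendsto_const_nhds
          (freq_of_ae haey)
        rw [hHt] at huniq
        have : s⁻¹ < 1 := inv_lt_one_of_one_lt₀ hs1
        linarith
      · -- 0 < D : Tmap decreases, Del ≤ 0, use weight -(s-1)
        have hsgn : ∀ s ∈ Ioi (1:ℝ),
            0 ≤ ((-1:ℝ) * (s - 1) + 0) * Del H 0 D (leftInv H s⁻¹) := by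
          intro s hs
          have hDel : Del H 0 D (leftInv H s⁻¹) ≤ 0 :=
            Del_nonpos (fun y hy => hmono (Tmap0_le hD.le hy _))
          have hN : ((-1:ℝ) * (s - 1) + 0) ≤ 0 := by
            have : (1:ℝ) < s := hs
            linarith
          exact mul_nonneg_of_np_np hN hDel
        have hae := ae_zero_of_combination hint1 hint2 hC1 hC2 hsgn
          (Or.inl (by norm_num))
        obtain ⟨s, hsB, hs1, hF⟩ := exists_of_ae hae 1
        have hs0 : (0:ℝ) < s⁻¹ := inv_pos.2 (lt_trans one_pos hs1)
        have hHt : H (leftInv H s⁻¹) = s⁻¹ := H_leftInv hmono hcont h0 h1 hs0 (inv_lt_one_of_one_lt₀ hs1)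
        have haey := ae_eq_of_Del_zero hmono hcont h0 h1 hF
          (Or.inl (fun y hy => hmono (Tmap0_le hD.le hy _)))
        have hlim : Tendsto (fun y => H (Tmap 0 D y (leftInv H s⁻¹))) atTop (nhds 0) :=
          h0.comp (tendsto_Tmap_zero_bot hD _)
        have huniq := tendsto_nhds_unique_of_frequently_eq hlim tendsto_const_nhds
          (freq_of_ae haey)
        rw [hHt] at huniq
        linarith
    · exfalso
      have hHc0 : 0 ≤ H (-D / ρ) := H_nonneg hmono h0 _
      rcases lt_or_gt_of_ne hρ with hρneg | hρpos
      · -- ρ < 0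
        have hsgn : ∀ s ∈ Ioi (1:ℝ),
            0 ≤ (-(H (-D / ρ)) * (s - 1) + (1 - H (-D / ρ))) * Del H ρ D (leftInv H s⁻¹) := by
          intro s hs
          have hs1 : (1:ℝ) < s := hs
          have hspos : (0:ℝ) < s := lt_trans one_pos hs1
          have hsinv : (0:ℝ) < s⁻¹ := inv_pos.2 hspos
          have hNeq : -(H (-D / ρ)) * (s - 1) + (1 - H (-D / ρ)) = 1 - H (-D / ρ) * s := by ring
          have e2 : s * s⁻¹ = 1 := mul_inv_cancel₀ hspos.ne'
          rcases le_or_gt s⁻¹ (H (-D / ρ)) with hle | hlt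
          · have hqle : leftInv H s⁻¹ ≤ -D / ρ := leftInv_le h0 hsinv hle
            have hDel : Del H ρ D (leftInv H s⁻¹) ≤ 0 :=
              Del_nonpos (fun y hy => hmono (Tmap_le_D hρ (one_lt_a hρneg hy).le hqle))
            have hN : 1 - H (-D / ρ) * s ≤ 0 := by
              have h3 := mul_le_mul_of_nonneg_left hle hspos.le
              rw [e2, mul_comm] at h3
              linarith
            rw [hNeq]
            exact mul_nonneg_of_np_np hN hDel
          · have hHq : H (leftInv H s⁻¹) = s⁻¹ :=
              H_leftInv hmono hcont h0 h1 hsinv (inv_lt_one_of_one_lt₀ hs1)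
            have hqgt : -D / ρ < leftInv H s⁻¹ := by
              by_contra hle2
              push_neg at hle2
              have := hmono hle2
              rw [hHq] at this
              linarith
            have hDel : 0 ≤ Del H ρ D (leftInv H s⁻¹) :=
              Del_nonneg (fun y hy => hmono (Tmap_le_C hρ (one_lt_a hρneg hy).le hqgt.le))
            have hN : 0 ≤ 1 - H (-D / ρ) * s := by
              have h3 := mul_lt_mul_of_pos_left hlt hspos
              rw [e2, mul_comm] at h3
              linarith
            rw [hNeq]
            exact mul_nonneg hN hDel
        have hαβ : -(H (-D / ρ)) ≠ 0 ∨ (1 - H (-D / ρ)) ≠ 0 := by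
          rcases eq_or_ne (H (-D / ρ)) 0 with h | h
          · exact Or.inr (by rw [h]; norm_num)
          · exact Or.inl (by simpa using h)
        have hae := ae_zero_of_combination hint1 hint2 hC1 hC2 hsgn hαβ
        obtain ⟨s, hsB, hs1, hF⟩ := exists_of_ae hae (max 1 (H (-D / ρ))⁻¹)
        have hs0 : (0:ℝ) < s⁻¹ := inv_pos.2 (lt_trans one_pos hs1)
        have hHt : H (leftInv H s⁻¹) = s⁻¹ := H_leftInv hmono hcont h0 h1 hs0 (inv_lt_one_of_one_lt₀ hs1)
        rcases lt_trichotomy (leftInv H s⁻¹) (-D / ρ) with hlt | heq | hgt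
        · have haey := ae_eq_of_Del_zero hmono hcont h0 h1 hF
            (Or.inl (fun y hy => hmono (Tmap_le_D hρ (one_lt_a hρneg hy).le hlt.le)))
          have hlim : Tendsto (fun y => H (Tmap ρ D y (leftInv H s⁻¹))) atTop (nhds 0) :=
            h0.comp (tendsto_Tmap_rho_neg_bot hρneg hlt)
          have huniq := tendsto_nhds_unique_of_frequently_eq hlim tendsto_const_nhds
            (freq_of_ae haey)
          rw [hHt] at huniq
          linarith
        · have : H (-D / ρ) = s⁻¹ := by rw [← heq, hHt]
          exact final_contra hs0 hsB this
        · have haey := ae_eq_of_Del_zero hmono hcont h0 h1 hF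
            (Or.inr (fun y hy => hmono (Tmap_le_C hρ (one_lt_a hρneg hy).le hgt.le)))
          have hlim : Tendsto (fun y => H (Tmap ρ D y (leftInv H s⁻¹))) atTop (nhds 1) :=
            h1.comp (tendsto_Tmap_rho_neg_top hρneg hgt)
          have huniq := tendsto_nhds_unique_of_frequently_eq hlim tendsto_const_nhds
            (freq_of_ae haey)
          rw [hHt] at huniq
          have : s⁻¹ < 1 := inv_lt_one_of_one_lt₀ hs1
          linarith
      · -- 0 < ρ
        have hsgn : ∀ s ∈ Ioi (1:ℝ),
            0 ≤ ((H (-D / ρ)) * (s - 1) + (H (-D / ρ) - 1)) * Del H ρ D (leftInv H s⁻¹) := by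
          intro s hs
          have hs1 : (1:ℝ) < s := hs
          have hspos : (0:ℝ) < s := lt_trans one_pos hs1
          have hsinv : (0:ℝ) < s⁻¹ := inv_pos.2 hspos
          have hNeq : (H (-D / ρ)) * (s - 1) + (H (-D / ρ) - 1) = H (-D / ρ) * s - 1 := by ring
          have e2 : s * s⁻¹ = 1 := mul_inv_cancel₀ hspos.ne'
          rcases le_or_gt s⁻¹ (H (-D / ρ)) with hle | hlt
          · have hqle : leftInv H s⁻¹ ≤ -D / ρ := leftInv_le h0 hsinv hle
            have hDel : 0 ≤ Del H ρ D (leftInv H s⁻¹) :=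
              Del_nonneg (fun y hy => hmono (Tmap_le_B hρ (a_lt_one hρpos hy).le hqle))
            have hN : 0 ≤ H (-D / ρ) * s - 1 := by
              have h3 := mul_le_mul_of_nonneg_left hle hspos.le
              rw [e2, mul_comm] at h3
              linarith
            rw [hNeq]
            exact mul_nonneg hN hDel
          · have hHq : H (leftInv H s⁻¹) = s⁻¹ :=
              H_leftInv hmono hcont h0 h1 hsinv (inv_lt_one_of_one_lt₀ hs1)
            have hqgt : -D / ρ < leftInv H s⁻¹ := by
              by_contra hle2
              push_neg at hle2
              have := hmono hle2
              rw [hHq] at this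
              linarith
            have hDel : Del H ρ D (leftInv H s⁻¹) ≤ 0 :=
              Del_nonpos (fun y hy => hmono (Tmap_le_A hρ (a_lt_one hρpos hy).le hqgt.le))
            have hN : H (-D / ρ) * s - 1 ≤ 0 := by
              have h3 := mul_lt_mul_of_pos_left hlt hspos
              rw [e2, mul_comm] at h3
              linarith
            rw [hNeq]
            exact mul_nonneg_of_np_np hN hDel
        have hαβ : (H (-D / ρ)) ≠ 0 ∨ (H (-D / ρ) - 1) ≠ 0 := by
          rcases eq_or_ne (H (-D / ρ)) 0 with h | h
          · exact Or.inr (by rw [h]; norm_num)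
          · exact Or.inl h
        have hae := ae_zero_of_combination hint1 hint2 hC1 hC2 hsgn hαβ
        obtain ⟨s, hsB, hs1, hF⟩ := exists_of_ae hae (max 1 (H (-D / ρ))⁻¹)
        have hs0 : (0:ℝ) < s⁻¹ := inv_pos.2 (lt_trans one_pos hs1)
        have hHt : H (leftInv H s⁻¹) = s⁻¹ := H_leftInv hmono hcont h0 h1 hs0 (inv_lt_one_of_one_lt₀ hs1)
        have hsign : (∀ y ∈ Ioi (1:ℝ), H (Tmap ρ D y (leftInv H s⁻¹)) ≤ H (leftInv H s⁻¹)) ∨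
            (∀ y ∈ Ioi (1:ℝ), H (leftInv H s⁻¹) ≤ H (Tmap ρ D y (leftInv H s⁻¹))) := by
          rcases le_total (leftInv H s⁻¹) (-D / ρ) with hle | hge
          · exact Or.inr (fun y hy => hmono (Tmap_le_B hρ (a_lt_one hρpos hy).le hle))
          · exact Or.inl (fun y hy => hmono (Tmap_le_A hρ (a_lt_one hρpos hy).le hge))
        have haey := ae_eq_of_Del_zero hmono hcont h0 h1 hF hsign
        have hlim : Tendsto (fun y => H (Tmap ρ D y (leftInv H s⁻¹))) atTop
            (nhds (H (-D / ρ))) :=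
          (hcont.tendsto _).comp (tendsto_Tmap_rho_pos hρpos D _)
        have huniq := tendsto_nhds_unique_of_frequently_eq hlim tendsto_const_nhds
          (freq_of_ae haey)
        rw [hHt] at huniq
        exact final_contra hs0 hsB huniq
  · rintro ⟨rfl, rfl⟩
    simp only [zero_mul, zero_div, ite_self, Real.rpow_zero, one_mul, add_zero]
    constructor
    · rw [setIntegral_congr_fun measurableSet_Ioi (fun x hx => ?_)]
      · exact integral_w
      · have hx0 : (0:ℝ) < x⁻¹ := inv_pos.2 (lt_trans one_pos hx)
        have hx1 : x⁻¹ < 1 := inv_lt_one_of_one_lt₀ hx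
        rw [integral_w_mul_const, H_leftInv hmono hcont h0 h1 hx0 hx1]
    · rw [setIntegral_congr_fun measurableSet_Ioi (fun x hx => ?_)]
      · exact integral_w
      · have hx0 : (0:ℝ) < x⁻¹ := inv_pos.2 (lt_trans one_pos hx)
        have hx1 : x⁻¹ < 1 := inv_lt_one_of_one_lt₀ hx
        have hp0 : (0:ℝ) < 1 - x⁻¹ := by linarith
        have hp1 : 1 - x⁻¹ < 1 := by linarith
        rw [integral_w_mul_const, H_leftInv hmono hcont h0 h1 hp0 hp1]
        ring
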